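/- Let G be a variable-regular Tanner graph with variable degree d_v = 3 and girth g ≥ 8. Then every nonempty stopping set S (a set of variable nodes such that every check node in the induced subgraph G(S) has degree at least 2) in which all check nodes of G(S) have degree exactly 2 satisfies |S| ≥ 6. -/

import Mathlib

/-- Degree of a variable node `v` in the Tanner graph given by adjacency `adj`. -/
def varDeg {V C : Type*} [Fintype C] (adj : V → C → Prop) [∀ v c, Decidable (adj v c)] (v : V) : ℕ :=
  (Finset.univ.filter (fun c => adj v c)).card

/-- Degree of a check node `c` in the subgraph induced by the set `S` of variable nodes. -/
def chkDeg {V C : Type*} [DecidableEq V] (adj : V → C → Prop) [∀ v c, Decidable (adj v c)]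
    (S : Finset V) (c : C) : ℕ :=
  (S.filter (fun v => adj v c)).card

/-- The set of check nodes of odd degree in the subgraph induced by `S`. -/
def oddChks {V C : Type*} [DecidableEq V] [Fintype C] (adj : V → C → Prop) [∀ v c, Decidable (adj v c)]
    (S : Finset V) : Finset C :=
  Finset.univ.filter (fun c => Odd (chkDeg adj S c))

/-- The Tanner graph of the adjacency relation `adj`, as a simple graph on `V ⊕ C`. -/
def tanner {V C : Type*} (adj : V → C → Prop) : SimpleGraph (V ⊕ C) where
  Adj x y := (∃ v c, x = Sum.inl v ∧ y = Sum.inr c ∧ adj v c) ∨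
    (∃ v c, x = Sum.inr c ∧ y = Sum.inl v ∧ adj v c)
  symm := by
    constructor
    rintro x y (⟨v, c, h1, h2, h3⟩ | ⟨v, c, h1, h2, h3⟩)
    · exact Or.inr ⟨v, c, h2, h1, h3⟩
    · exact Or.inl ⟨v, c, h2, h1, h3⟩
  loopless := by
    constructor
    rintro x (⟨v, c, h1, h2, _⟩ | ⟨v, c, h1, h2, _⟩) <;> subst h1 <;> simp at h2

open SimpleGraph in
lemma tanner_no4 {V C : Type*} (adj : V → C → Prop)
    (hgirth : (8 : ℕ∞) ≤ (tanner adj).egirth)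
    {v u : V} {c c' : C} (hvu : v ≠ u) (hcc : c ≠ c')
    (h1 : adj v c) (h2 : adj u c) (h3 : adj v c') (h4 : adj u c') : False := by
  have ha : ∀ (a : V) (b : C), adj a b → (tanner adj).Adj (Sum.inl a) (Sum.inr b) :=
    fun a b h => Or.inl ⟨a, b, rfl, rfl, h⟩
  have hb : ∀ (a : V) (b : C), adj a b → (tanner adj).Adj (Sum.inr b) (Sum.inl a) :=
    fun a b h => Or.inr ⟨a, b, rfl, rfl, h⟩
  let w : (tanner adj).Walk (Sum.inl v) (Sum.inl v) :=
    Walk.cons (ha v c h1) (Walk.cons (hb u c h2) (Walk.cons (ha u c' h4)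
      (Walk.cons (hb v c' h3) Walk.nil)))
  have hc : w.IsCycle := by
    simp [w, Walk.isCycle_def, Walk.isTrail_def, List.Nodup, List.pairwise_cons,
      hvu, hcc, hvu.symm, hcc.symm, Sym2.eq_iff]
  have := SimpleGraph.le_egirth.mp hgirth _ w hc
  norm_num [w] at this

open SimpleGraph in
lemma tanner_no6 {V C : Type*} (adj : V → C → Prop)
    (hgirth : (8 : ℕ∞) ≤ (tanner adj).egirth)
    {v u x : V} {c1 c2 c3 : C}
    (hvu : v ≠ u) (hvx : v ≠ x) (hux : u ≠ x)
    (h12 : c1 ≠ c2) (h13 : c1 ≠ c3) (h23 : c2 ≠ c3)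
    (a1 : adj v c1) (a2 : adj u c1) (a3 : adj u c2) (a4 : adj x c2)
    (a5 : adj x c3) (a6 : adj v c3) : False := by
  have ha : ∀ (a : V) (b : C), adj a b → (tanner adj).Adj (Sum.inl a) (Sum.inr b) :=
    fun a b h => Or.inl ⟨a, b, rfl, rfl, h⟩
  have hb : ∀ (a : V) (b : C), adj a b → (tanner adj).Adj (Sum.inr b) (Sum.inl a) :=
    fun a b h => Or.inr ⟨a, b, rfl, rfl, h⟩
  let w : (tanner adj).Walk (Sum.inl v) (Sum.inl v) :=
    Walk.cons (ha v c1 a1) (Walk.cons (hb u c1 a2) (Walk.cons (ha u c2 a3)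
      (Walk.cons (hb x c2 a4) (Walk.cons (ha x c3 a5) (Walk.cons (hb v c3 a6) Walk.nil)))))
  have hc : w.IsCycle := by
    simp [w, Walk.isCycle_def, Walk.isTrail_def, List.Nodup, List.pairwise_cons,
      hvu, hvx, hux, h12, h13, h23, hvu.symm, hvx.symm, hux.symm,
      h12.symm, h13.symm, h23.symm, Sym2.eq_iff]
  have := SimpleGraph.le_egirth.mp hgirth _ w hc
  norm_num [w] at this

/-- In a variable-regular Tanner graph with variable degree 3 and girth ≥ 8,
every nonempty elementary stopping set (all check nodes of `G(S)` have degree exactly 2)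
has size at least 6. -/
theorem ess_size_ge_six {V C : Type*} [Fintype C] [DecidableEq V]
    (adj : V → C → Prop) [∀ v c, Decidable (adj v c)]
    (hreg : ∀ v : V, varDeg adj v = 3)
    (hgirth : (8 : ℕ∞) ≤ (tanner adj).egirth)
    (S : Finset V) (hne : S.Nonempty)
    (helem : ∀ c : C, chkDeg adj S c = 0 ∨ chkDeg adj S c = 2) :
    6 ≤ S.card := by
  classical
  -- no check node is adjacent to three distinct members of S
  have not3 : ∀ (c : C) (a b d : V), a ∈ S → b ∈ S → d ∈ S → a ≠ b → a ≠ d → b ≠ d →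
      adj a c → adj b c → adj d c → False := by
    intro c a b d haS hbS hdS hab had hbd ha hb hd
    have hsub : ({a, b, d} : Finset V) ⊆ S.filter (fun v => adj v c) := by
      intro x hx
      simp only [Finset.mem_insert, Finset.mem_singleton] at hx
      rcases hx with rfl | rfl | rfl <;> simp [Finset.mem_filter, *]
    have hcard : ({a, b, d} : Finset V).card = 3 := by
      rw [Finset.card_insert_of_notMem (by simp [hab, had]),
        Finset.card_insert_of_notMem (by simp [hbd])]
      simp
    have h3 := Finset.card_le_card hsub
    rw [hcard] at h3
    have := helem c
    unfold chkDeg at this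
    omega
  -- each check adjacent to v ∈ S has a unique second member of S
  have pair : ∀ v ∈ S, ∀ c : C, adj v c →
      ∃ u, u ∈ S ∧ u ≠ v ∧ adj u c := by
    intro v hv c hvc
    have h0 : chkDeg adj S c ≠ 0 := by
      unfold chkDeg
      intro h
      have : v ∈ S.filter (fun x => adj x c) := by simp [Finset.mem_filter, hv, hvc]
      rw [Finset.card_eq_zero.mp h] at this
      simp at this
    have h2 : chkDeg adj S c = 2 := (helem c).resolve_left h0
    obtain ⟨a, b, hab, hfil⟩ := Finset.card_eq_two.mp h2
    have hvf : v ∈ S.filter (fun x => adj x c) := by simp [Finset.mem_filter, hv, hvc]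
    rw [hfil] at hvf
    simp only [Finset.mem_insert, Finset.mem_singleton] at hvf
    rcases hvf with rfl | rfl
    · have hbf : b ∈ S.filter (fun x => adj x c) := by rw [hfil]; simp
      rw [Finset.mem_filter] at hbf
      exact ⟨b, hbf.1, hab.symm, hbf.2⟩
    · have haf : a ∈ S.filter (fun x => adj x c) := by rw [hfil]; simp
      rw [Finset.mem_filter] at haf
      exact ⟨a, haf.1, hab, haf.2⟩
  -- the neighborhood in the normal graph
  set N : V → Finset V := fun v => (S.erase v).filter (fun u => ∃ c, adj v c ∧ adj u c) with hN
  have cardN : ∀ v ∈ S, 3 ≤ (N v).card := by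
    intro v hv
    have := hreg v
    unfold varDeg at this
    rw [← this]
    apply Finset.card_le_card_of_injOn
      (fun c => if h : adj v c then (pair v hv c h).choose else v)
    · intro c hc
      simp only [Finset.mem_coe, Finset.mem_filter, Finset.mem_univ, true_and] at hc
      simp only [hc, dif_pos]
      obtain ⟨huS, huv, huc⟩ := (pair v hv c hc).choose_spec
      simp only [hN, Finset.mem_coe, Finset.mem_filter, Finset.mem_erase]
      exact ⟨⟨huv, huS⟩, c, hc, huc⟩
    · intro c hc c' hc' hfe
      simp only [Finset.coe_filter, Set.mem_setOf_eq, Finset.mem_univ, true_and] at hc hc'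
      simp only [hc, hc', dif_pos] at hfe
      obtain ⟨huS, huv, huc⟩ := (pair v hv c hc).choose_spec
      obtain ⟨huS', huv', huc'⟩ := (pair v hv c' hc').choose_spec
      by_contra hne'
      rw [hfe] at huc
      exact tanner_no4 adj hgirth (Ne.symm huv') hne' hc huc hc' huc'
  -- pick v0 and a neighbor u0
  obtain ⟨v0, hv0⟩ := hne
  have hN3 := cardN v0 hv0
  have : (N v0).Nonempty := Finset.card_pos.mp (by omega)
  obtain ⟨u0, hu0⟩ := this
  simp only [hN, Finset.mem_filter, Finset.mem_erase] at hu0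
  obtain ⟨⟨hu0v0, hu0S⟩, c1, hvc1, huc1⟩ := hu0
  -- N v0 and N u0 are disjoint
  have hdisj : Disjoint (N v0) (N u0) := by
    rw [Finset.disjoint_left]
    intro w hw1 hw2
    simp only [hN, Finset.mem_filter, Finset.mem_erase] at hw1 hw2
    obtain ⟨⟨hwv0, hwS⟩, c3, hvc3, hwc3⟩ := hw1
    obtain ⟨⟨hwu0, _⟩, c2, huc2, hwc2⟩ := hw2
    have h12 : c1 ≠ c2 := fun h => not3 c1 v0 u0 w hv0 hu0S hwS (Ne.symm hu0v0) (Ne.symm hwv0)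
      (Ne.symm hwu0) hvc1 huc1 (h ▸ hwc2)
    have h13 : c1 ≠ c3 := fun h => not3 c1 v0 u0 w hv0 hu0S hwS (Ne.symm hu0v0) (Ne.symm hwv0)
      (Ne.symm hwu0) hvc1 huc1 (h ▸ hwc3)
    have h23 : c2 ≠ c3 := fun h => not3 c2 v0 u0 w hv0 hu0S hwS (Ne.symm hu0v0) (Ne.symm hwv0)
      (Ne.symm hwu0) (h ▸ hvc3) huc2 hwc2
    exact tanner_no6 adj hgirth (Ne.symm hu0v0) (Ne.symm hwv0) (Ne.symm hwu0)
      h12 h13 h23 hvc1 huc1 huc2 hwc2 hwc3 hvc3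
  have hsub : N v0 ∪ N u0 ⊆ S := by
    intro x hx
    rcases Finset.mem_union.mp hx with h | h <;>
      · simp only [hN, Finset.mem_filter, Finset.mem_erase] at h
        exact h.1.2
  have := Finset.card_le_card hsub
  rw [Finset.card_union_of_disjoint hdisj] at this
  have hN3' := cardN u0 hu0S
  omega
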